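/- For α ∈ (0,1) and θ ∈ (0, π/2), the quantity ς(θ) = 1 − tan θ / tan((1+α)θ) satisfies ς(θ) = sin(αθ)/(sin((1+α)θ) cos θ), and θ ↦ ς(θ) is strictly increasing on (0, π/2) with ς(0+) = α/(1+α) and ς(θ) → ∞ as θ → π/2. -/

import Mathlib

open Filter

noncomputable def sigmaOf (α θ : ℝ) : ℝ :=
  1 - Real.tan θ / Real.tan ((1+α)*θ)

lemma key_ineq (α φ : ℝ) (hα0 : 0 < α) (hα1 : α < 1) (hφ : 0 < φ) (hφπ : φ < Real.pi) :
    Real.sin ((1+α)*φ) < (1+α) * Real.sin φ := by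
  have hsφ : 0 < Real.sin φ := Real.sin_pos_of_pos_of_lt_pi hφ hφπ
  have haφ0 : 0 < α*φ := by positivity
  have haφπ : α*φ < Real.pi := by nlinarith
  have hsaφ : 0 < Real.sin (α*φ) := Real.sin_pos_of_pos_of_lt_pi haφ0 haφπ
  have hcos1 : Real.cos (α*φ) < 1 := by
    have := Real.cos_lt_cos_of_nonneg_of_le_pi (le_refl 0) haφπ.le haφ0
    simpa using this
  have h2 : Real.cos φ * Real.sin (α*φ) < α * Real.sin φ := by
    rcases le_or_gt (Real.cos φ) 0 with hc | hc
    · nlinarith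
    · have hφ2 : φ < Real.pi/2 := by
        by_contra h
        push_neg at h
        have := Real.cos_nonpos_of_pi_div_two_le_of_le h (by linarith [Real.pi_pos])
        linarith
      have h3 : Real.sin (α*φ) < α*φ := Real.sin_lt haφ0
      have h4 : φ < Real.tan φ := Real.lt_tan hφ hφ2
      rw [Real.tan_eq_sin_div_cos] at h4
      have h5 : φ * Real.cos φ < Real.sin φ := by
        rw [lt_div_iff₀ hc] at h4; linarith
      nlinarith
  rw [show (1+α)*φ = φ + α*φ by ring, Real.sin_add]
  nlinarith


lemma hasDerivAt_sin_mul (c x : ℝ) :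
    HasDerivAt (fun t => Real.sin (c*t)) (c * Real.cos (c*x)) x := by
  have h : HasDerivAt (fun t : ℝ => c*t) c x := by
    simpa using (hasDerivAt_id x).const_mul c
  have := (Real.hasDerivAt_sin (c*x)).comp x h
  exact this.congr_deriv (mul_comm _ _)

lemma hasDerivAt_cos_mul (c x : ℝ) :
    HasDerivAt (fun t => Real.cos (c*t)) (-(c * Real.sin (c*x))) x := by
  have h : HasDerivAt (fun t : ℝ => c*t) c x := by
    simpa using (hasDerivAt_id x).const_mul c
  have := (Real.hasDerivAt_cos (c*x)).comp x h
  exact this.congr_deriv (by ring)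

theorem sigmaOf_properties (α : ℝ) (hα : α ∈ Set.Ioo (0:ℝ) 1) :
    (∀ θ ∈ Set.Ioo (0:ℝ) (Real.pi/2),
        sigmaOf α θ = Real.sin (α*θ) / (Real.sin ((1+α)*θ) * Real.cos θ)) ∧
    StrictMonoOn (sigmaOf α) (Set.Ioo 0 (Real.pi/2)) ∧
    Tendsto (sigmaOf α) (nhdsWithin 0 (Set.Ioi 0)) (nhds (α/(1+α))) ∧
    Tendsto (sigmaOf α) (nhdsWithin (Real.pi/2) (Set.Iio (Real.pi/2))) atTop := by
  obtain ⟨hα0, hα1⟩ := hα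
  have hπ := Real.pi_pos
  have hfacts : ∀ θ ∈ Set.Ioo (0:ℝ) (Real.pi/2),
      0 < Real.cos θ ∧ 0 < Real.sin ((1+α)*θ) ∧ 0 < Real.sin (α*θ) := by
    rintro θ ⟨h1, h2⟩
    refine ⟨Real.cos_pos_of_mem_Ioo ⟨by linarith, h2⟩, ?_, ?_⟩
    · exact Real.sin_pos_of_pos_of_lt_pi (by nlinarith) (by nlinarith)
    · exact Real.sin_pos_of_pos_of_lt_pi (by nlinarith) (by nlinarith)
  set g : ℝ → ℝ := fun θ => Real.sin (α*θ) / (Real.sin ((1+α)*θ) * Real.cos θ) with hg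
  -- Part 1: pointwise identity
  have hid : ∀ θ ∈ Set.Ioo (0:ℝ) (Real.pi/2), sigmaOf α θ = g θ := by
    intro θ hθ
    obtain ⟨hc, hS, _⟩ := hfacts θ hθ
    have hsin_sub : Real.sin (α*θ) =
        Real.sin ((1+α)*θ) * Real.cos θ - Real.cos ((1+α)*θ) * Real.sin θ := by
      rw [show α*θ = (1+α)*θ - θ by ring, Real.sin_sub]
    simp only [hg, sigmaOf]
    rw [Real.tan_eq_sin_div_cos, Real.tan_eq_sin_div_cos, hsin_sub]
    rcases eq_or_ne (Real.cos ((1+α)*θ)) 0 with hC | hC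
    · rw [hC, div_zero, div_zero, sub_zero]
      field_simp
      ring
    · field_simp
  -- derivative numerator positivity
  have hnum : ∀ θ ∈ Set.Ioo (0:ℝ) (Real.pi/2),
      0 < α * Real.cos (α*θ) * (Real.sin ((1+α)*θ) * Real.cos θ) -
          Real.sin (α*θ) * ((1+α) * Real.cos ((1+α)*θ) * Real.cos θ -
            Real.sin ((1+α)*θ) * Real.sin θ) := by
    rintro θ ⟨h1, h2⟩
    have key := key_ineq α (2*θ) hα0 hα1 (by linarith) (by linarith)
    have e1 : Real.sin ((1+α)*θ) = Real.sin θ * Real.cos (α*θ) + Real.cos θ * Real.sin (α*θ) := by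
      rw [show (1+α)*θ = θ + α*θ by ring, Real.sin_add]
    have e2 : Real.cos ((1+α)*θ) = Real.cos θ * Real.cos (α*θ) - Real.sin θ * Real.sin (α*θ) := by
      rw [show (1+α)*θ = θ + α*θ by ring, Real.cos_add]
    have e3 : Real.sin ((1+α)*(2*θ)) = 2 * Real.sin ((1+α)*θ) * Real.cos ((1+α)*θ) := by
      rw [show (1+α)*(2*θ) = 2*((1+α)*θ) by ring, Real.sin_two_mul]
    have e4 : Real.sin (2*θ) = 2 * Real.sin θ * Real.cos θ := Real.sin_two_mul θ
    rw [e3, e4] at key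
    have p1 := Real.sin_sq_add_cos_sq (α*θ)
    have p2 := Real.sin_sq_add_cos_sq θ
    rw [e1, e2] at key ⊢
    nlinarith [key, p1, p2, mul_pos (mul_pos (Real.sin_pos_of_pos_of_lt_pi h1 (by linarith)) (Real.cos_pos_of_mem_Ioo ⟨by linarith, h2⟩)) (show (0:ℝ) < 1+α by linarith), sq_nonneg (Real.sin (α*θ)), sq_nonneg (Real.cos (α*θ))]
  -- derivative of g
  have hderiv : ∀ θ ∈ Set.Ioo (0:ℝ) (Real.pi/2),
      HasDerivAt g ((α * Real.cos (α*θ) * (Real.sin ((1+α)*θ) * Real.cos θ) -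
          Real.sin (α*θ) * ((1+α) * Real.cos ((1+α)*θ) * Real.cos θ -
            Real.sin ((1+α)*θ) * Real.sin θ)) / (Real.sin ((1+α)*θ) * Real.cos θ)^2) θ := by
    intro θ hθ
    obtain ⟨hc, hS, _⟩ := hfacts θ hθ
    have hu : HasDerivAt (fun t => Real.sin (α*t)) (α * Real.cos (α*θ)) θ :=
      hasDerivAt_sin_mul α θ
    have hv1 : HasDerivAt (fun t => Real.sin ((1+α)*t)) ((1+α) * Real.cos ((1+α)*θ)) θ :=
      hasDerivAt_sin_mul (1+α) θ
    have hv : HasDerivAt (fun t => Real.sin ((1+α)*t) * Real.cos t)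
        ((1+α) * Real.cos ((1+α)*θ) * Real.cos θ - Real.sin ((1+α)*θ) * Real.sin θ) θ := by
      have := hv1.mul (Real.hasDerivAt_cos θ)
      exact this.congr_deriv (by ring)
    have := hu.div hv (by positivity)
    exact this
  -- Part 2: strict monotonicity of g, then of sigmaOf
  have hgmono : StrictMonoOn g (Set.Ioo 0 (Real.pi/2)) := by
    apply strictMonoOn_of_deriv_pos (convex_Ioo _ _)
    · intro θ hθ
      exact ((hderiv θ hθ).differentiableAt.continuousAt).continuousWithinAt
    · intro θ hθ
      rw [interior_Ioo] at hθ
      rw [(hderiv θ hθ).deriv]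
      obtain ⟨hc, hS, _⟩ := hfacts θ hθ
      have := hnum θ hθ
      positivity
  have hmono : StrictMonoOn (sigmaOf α) (Set.Ioo 0 (Real.pi/2)) := by
    intro x hx y hy hxy
    rw [hid x hx, hid y hy]
    exact hgmono hx hy hxy
  -- membership-in-Ioo eventually facts
  have hmem0 : ∀ᶠ θ in nhdsWithin 0 (Set.Ioi 0), θ ∈ Set.Ioo (0:ℝ) (Real.pi/2) := by
    have : Set.Ioo (0:ℝ) (Real.pi/2) ∈ nhdsWithin 0 (Set.Ioi 0) :=
      Ioo_mem_nhdsGT_of_mem ⟨le_refl 0, by linarith⟩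
    exact this
  have hmemπ : ∀ᶠ θ in nhdsWithin (Real.pi/2) (Set.Iio (Real.pi/2)),
      θ ∈ Set.Ioo (0:ℝ) (Real.pi/2) := by
    have : Set.Ioo (0:ℝ) (Real.pi/2) ∈ nhdsWithin (Real.pi/2) (Set.Iio (Real.pi/2)) :=
      Ioo_mem_nhdsLT_of_mem ⟨by linarith, le_refl _⟩
    exact this
  -- Part 3: limit at 0+
  have hlim0 : Tendsto (sigmaOf α) (nhdsWithin 0 (Set.Ioi 0)) (nhds (α/(1+α))) := by
    have hu : HasDerivAt (fun t => Real.sin (α*t)) α 0 := by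
      simpa using hasDerivAt_sin_mul α 0
    have hv : HasDerivAt (fun t => Real.sin ((1+α)*t) * Real.cos t) (1+α) 0 := by
      have h1 : HasDerivAt (fun t => Real.sin ((1+α)*t)) (1+α) 0 := by
        simpa using hasDerivAt_sin_mul (1+α) 0
      have := h1.mul (Real.hasDerivAt_cos 0)
      exact this.congr_deriv (by simp)
    rw [hasDerivAt_iff_tendsto_slope] at hu hv
    have hmono' : nhdsWithin (0:ℝ) (Set.Ioi 0) ≤ nhdsWithin 0 {(0:ℝ)}ᶜ :=
      nhdsWithin_mono 0 (fun x hx => ne_of_gt hx)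
    have hu' := hu.mono_left hmono'
    have hv' := hv.mono_left hmono'
    have hdivlim := hu'.div hv' (by positivity)
    apply hdivlim.congr'
    filter_upwards [hmem0, self_mem_nhdsWithin] with θ hθ hθ0
    obtain ⟨hc, hS, _⟩ := hfacts θ hθ
    have hθne : θ ≠ 0 := ne_of_gt hθ0
    rw [hid θ hθ]
    have hb : Real.sin ((1+α)*θ) * Real.cos θ ≠ 0 := by positivity
    simp only [Pi.div_apply, slope_def_field, hg, mul_zero, Real.sin_zero, Real.cos_zero,
      sub_zero, zero_mul]
    field_simp
  -- Part 4: limit at π/2−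
  have hlimπ : Tendsto (sigmaOf α) (nhdsWithin (Real.pi/2) (Set.Iio (Real.pi/2))) atTop := by
    have hL : 0 < Real.sin (α*(Real.pi/2)) / Real.sin ((1+α)*(Real.pi/2)) := by
      apply div_pos
      · exact Real.sin_pos_of_pos_of_lt_pi (by positivity) (by nlinarith)
      · exact Real.sin_pos_of_pos_of_lt_pi (by nlinarith) (by nlinarith)
    have h1 : Tendsto (fun θ => Real.sin (α*θ) / Real.sin ((1+α)*θ))
        (nhdsWithin (Real.pi/2) (Set.Iio (Real.pi/2)))
        (nhds (Real.sin (α*(Real.pi/2)) / Real.sin ((1+α)*(Real.pi/2)))) := by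
      apply Tendsto.mono_left _ nhdsWithin_le_nhds
      apply Tendsto.div
      · exact (Real.continuous_sin.comp (continuous_const.mul continuous_id)).continuousAt
      · exact (Real.continuous_sin.comp (continuous_const.mul continuous_id)).continuousAt
      · exact ne_of_gt (Real.sin_pos_of_pos_of_lt_pi (by nlinarith) (by nlinarith))
    have h2 : Tendsto (fun θ => (Real.cos θ)⁻¹)
        (nhdsWithin (Real.pi/2) (Set.Iio (Real.pi/2))) atTop := by
      apply Filter.Tendsto.inv_tendsto_nhdsGT_zero
      rw [tendsto_nhdsWithin_iff]
      constructor
      · have : Tendsto Real.cos (nhds (Real.pi/2)) (nhds (Real.cos (Real.pi/2))) :=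
          Real.continuous_cos.continuousAt
        rw [Real.cos_pi_div_two] at this
        exact this.mono_left nhdsWithin_le_nhds
      · filter_upwards [hmemπ] with θ hθ
        exact (hfacts θ hθ).1
    have := h1.pos_mul_atTop hL h2
    apply this.congr'
    filter_upwards [hmemπ] with θ hθ
    rw [hid θ hθ]
    simp only [hg]
    rw [← div_eq_mul_inv, div_div]
  exact ⟨hid, hmono, hlim0, hlimπ⟩
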